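/- If (a_1,...,a_n) ≤_D (b_1,...,b_n) in the Deodhar order, then for any k ≤ n and any nonnegative integers c_{k+1},...,c_m, one has (a_1,...,a_k,c_{k+1},...,c_m) ≤_D (b_1,...,b_k,c_{k+1},...,c_m). -/

import Mathlib

/-- coinv: number of pairs i < j with 0 < a i < a j. -/
def coinv (n : ℕ) (a : Fin n → ℕ) : ℕ :=
  (Finset.univ.filter (fun p : Fin n × Fin n => p.1 < p.2 ∧ 0 < a p.1 ∧ a p.1 < a p.2)).card

/-- Length of a rook-monoid sequence: ∑_{i : a_i ≠ 0} (a_i + n - i) - coinv (1-based i). -/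
def rookLen (n : ℕ) (a : Fin n → ℕ) : ℤ :=
  (∑ i : Fin n, if a i ≠ 0 then ((a i : ℤ) + n - (i.val + 1)) else 0) - coinv n a

/-- A rook-monoid sequence: entries in {0,...,n} with distinct nonzero entries. -/
def IsRook (n : ℕ) (a : Fin n → ℕ) : Prop :=
  (∀ i, a i ≤ n) ∧ ∀ i j : Fin n, i ≠ j → a i ≠ 0 → a i ≠ a j

/-- Non-increasing rearrangement of a list. -/
def sortDesc (l : List ℕ) : List ℕ := l.insertionSort (· ≥ ·)

/-- Containment order: entrywise comparison of non-increasing rearrangements. -/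
def contLE (l m : List ℕ) : Prop := List.Forall₂ (· ≤ ·) (sortDesc l) (sortDesc m)

/-- Deodhar order: containment of all truncations. -/
def deodharLE (n : ℕ) (x y : Fin n → ℕ) : Prop :=
  ∀ k : ℕ, k ≤ n → contLE ((List.ofFn x).take k) ((List.ofFn y).take k)

/-- Deodhar order on lists: containment of all truncations. -/
def deodharLEList (l m : List ℕ) : Prop := ∀ k : ℕ, contLE (l.take k) (m.take k)

def cnt (t : ℕ) (l : List ℕ) : ℕ := l.countP (fun x => decide (t < x))

lemma cnt_mono {s u : List ℕ} (h : List.Forall₂ (· ≤ ·) s u) (t : ℕ) :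
    cnt t s ≤ cnt t u := by
  induction h with
  | nil => exact le_refl _
  | @cons a b s u hab _ ih =>
    simp only [cnt, List.countP_cons] at ih ⊢
    by_cases h1 : t < a
    · simp [h1, lt_of_lt_of_le h1 hab]; omega
    · by_cases h2 : t < b <;> simp [h1, h2] <;> omega

lemma forall₂_of_cnt (s : List ℕ) : ∀ u : List ℕ, s.Pairwise (· ≥ ·) → u.Pairwise (· ≥ ·) →
    s.length = u.length → (∀ t, cnt t s ≤ cnt t u) → List.Forall₂ (· ≤ ·) s u := by
  induction s with
  | nil => intro u _ _ hlen _; cases u with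
    | nil => exact List.Forall₂.nil
    | cons b u => simp at hlen
  | cons a s ih =>
    intro u hs hu hlen hcnt
    cases u with
    | nil => simp at hlen
    | cons b u =>
      rw [List.pairwise_cons] at hs hu
      have hu0 : cnt b u = 0 := by
        simp only [cnt]
        exact List.countP_eq_zero.mpr fun x hx => by
          simpa using not_lt.mpr (hu.1 x hx)
      have hab : a ≤ b := by
        have := hcnt b
        simp only [cnt, List.countP_cons] at this
        rw [show u.countP (fun x => decide (b < x)) = 0 from hu0] at this
        by_contra hba
        simp [lt_of_not_ge hba, lt_irrefl] at this
      refine List.Forall₂.cons hab (ih u hs.2 hu.2 (by simpa using hlen) ?_)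
      intro t
      have := hcnt t
      simp only [cnt, List.countP_cons] at this ⊢
      by_cases h1 : t < a
      · simp [h1, lt_of_lt_of_le h1 hab] at this; omega
      · have : cnt t s = 0 := by
          simp only [cnt]
          exact List.countP_eq_zero.mpr fun x hx => by
            simpa using not_lt.mpr (le_trans (hs.1 x hx) (not_lt.mp h1))
        simp only [cnt] at this
        omega

lemma cnt_sortDesc (t : ℕ) (l : List ℕ) : cnt t (sortDesc l) = cnt t l :=
  (List.perm_insertionSort _ l).countP_eq _

lemma contLE_append {l m : List ℕ} (c : List ℕ) (h : contLE l m) : contLE (l ++ c) (m ++ c) := by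
  have hlen : l.length = m.length := by
    have := h.length_eq
    simpa [sortDesc, List.length_insertionSort] using this
  refine forall₂_of_cnt _ _ (List.pairwise_insertionSort _ _) (List.pairwise_insertionSort _ _) ?_ ?_
  · simp [sortDesc, List.length_insertionSort, hlen]
  · intro t
    have h1 : cnt t l ≤ cnt t m := by
      have := cnt_mono h t
      rwa [cnt_sortDesc, cnt_sortDesc] at this
    rw [cnt_sortDesc, cnt_sortDesc]
    simp only [cnt, List.countP_append]
    have := h1; simp only [cnt] at this; omega

theorem deodhar_truncate_append (n : ℕ) (a b : Fin n → ℕ) (h : deodharLE n a b)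
    (k : ℕ) (hk : k ≤ n) (c : List ℕ) :
    deodharLEList ((List.ofFn a).take k ++ c) ((List.ofFn b).take k ++ c) := by
  intro j
  have hla : ((List.ofFn a).take k).length = k := by simp [min_eq_left hk]
  have hlb : ((List.ofFn b).take k).length = k := by simp [min_eq_left hk]
  rcases le_or_gt j k with hj | hj
  · rw [List.take_append_of_le_length (by omega), List.take_append_of_le_length (by omega),
      List.take_take, min_eq_left hj, List.take_take, min_eq_left hj]
    exact h j (le_trans hj hk)
  · have e1 : ((List.ofFn a).take k ++ c).take j = (List.ofFn a).take k ++ c.take (j - k) := by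
      rw [List.take_append, hla, List.take_take, min_eq_right (le_of_lt hj)]
    have e2 : ((List.ofFn b).take k ++ c).take j = (List.ofFn b).take k ++ c.take (j - k) := by
      rw [List.take_append, hlb, List.take_take, min_eq_right (le_of_lt hj)]
    rw [e1, e2]
    exact contLE_append _ (h k hk)
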